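/- Let p ∈ K[X] be monic irreducible of degree g, let k ≥ 1, and let a_1, …, a_k be natural numbers with a_k > 0 and g·∑_{i=1}^{k} i·a_i = dim_K E. Then there exists a K-linear endomorphism u of E whose minimal polynomial is p^k and such that E, as a K[X]-module with X acting as u, is isomorphic to ⨁_{i=1}^{k} (K[X]/(p^i))^{a_i}. -/

import Mathlib

open Polynomial

section aux
variable {K : Type*} [Field K]

lemma aux_smul_quot_eq_zero (q r : K[X]) (x : K[X] ⧸ Ideal.span {r}) (h : r ∣ q) :
    q • x = 0 := by
  obtain ⟨y, rfl⟩ := Ideal.Quotient.mk_surjective x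
  have : (Ideal.Quotient.mk (Ideal.span {r})) (q * y) = 0 := by
    rw [Ideal.Quotient.eq_zero_iff_mem]
    exact Ideal.mul_mem_right _ _ (Ideal.mem_span_singleton.mpr h)
  exact this

lemma aux_smul_quot_one (q r : K[X]) (h : q • (Ideal.Quotient.mk (Ideal.span {r}) 1) = 0) :
    r ∣ q := by
  change Ideal.Quotient.mk (Ideal.span {r}) (q * 1) = 0 at h
  rw [mul_one,
    Ideal.Quotient.eq_zero_iff_mem, Ideal.mem_span_singleton] at h
  exact h

lemma aux_finrank_quot (q : K[X]) (hq : q ≠ 0) :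
    Module.finrank K (K[X] ⧸ Ideal.span {q}) = q.natDegree :=
  (AdjoinRoot.powerBasis hq).finrank

lemma aux_fd_quot (q : K[X]) (hq : q ≠ 0) :
    FiniteDimensional K (K[X] ⧸ Ideal.span {q}) :=
  (AdjoinRoot.powerBasis hq).finite

end aux

set_option maxHeartbeats 1000000 in
/-- Given a monic irreducible `p` of degree `g`, `k ≥ 1` and multiplicities `a 1, …, a k` with
`a k > 0` and `g * ∑ i * a i = dim E`, there is an endomorphism `u` of `E` with minimal
polynomial `p ^ k` such that `E` as a `K[X]`-module (with `X` acting as `u`) is isomorphic to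
`⨁ i in {1,…,k}, (K[X]/(p^i))^(a i)`. -/
theorem stmt_2 {K E : Type*} [Field K] [AddCommGroup E] [Module K E]
    [FiniteDimensional K E]
    (p : K[X]) (hp : p.Monic) (hirr : Irreducible p)
    (k : ℕ) (hk : 1 ≤ k) (a : ℕ → ℕ) (hak : 0 < a k)
    (hdim : p.natDegree * ∑ i ∈ Finset.Icc 1 k, i * a i = Module.finrank K E) :
    ∃ u : Module.End K E, minpoly K u = p ^ k ∧
      Nonempty (Module.AEval' u ≃ₗ[K[X]]
        DirectSum (Fin k) fun i => Fin (a (i.1 + 1)) → K[X] ⧸ Ideal.span {p ^ (i.1 + 1)}) := by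
  classical
  have hp0 : p ≠ 0 := hp.ne_zero
  set N : Fin k → Type _ :=
    fun i => Fin (a (i.1 + 1)) → K[X] ⧸ Ideal.span {p ^ (i.1 + 1)} with hN
  haveI hQfd : ∀ i : Fin k, FiniteDimensional K (K[X] ⧸ Ideal.span {p ^ (i.1 + 1)}) :=
    fun i => aux_fd_quot _ (pow_ne_zero _ hp0)
  have hQrk : ∀ i : Fin k, Module.finrank K (K[X] ⧸ Ideal.span {p ^ (i.1 + 1)})
      = (i.1 + 1) * p.natDegree := fun i => by
    rw [aux_finrank_quot _ (pow_ne_zero _ hp0), natDegree_pow]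
  haveI hNfd : ∀ i, FiniteDimensional K (N i) := fun i => inferInstance
  have hMrk : Module.finrank K (DirectSum (Fin k) N) = Module.finrank K E := by
    rw [Module.finrank_directSum]
    have h1 : ∀ i : Fin k,
        Module.finrank K (N i) = a (i.1 + 1) * ((i.1 + 1) * p.natDegree) := by
      intro i
      calc Module.finrank K (N i)
          = ∑ _j : Fin (a (i.1 + 1)),
              Module.finrank K (K[X] ⧸ Ideal.span {p ^ (i.1 + 1)}) :=
            Module.finrank_pi_fintype K
        _ = a (i.1 + 1) * ((i.1 + 1) * p.natDegree) := by
            rw [Finset.sum_const, hQrk i]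
            simp [mul_comm]
    rw [Finset.sum_congr rfl fun i _ => h1 i, ← hdim, Finset.mul_sum,
      ← Finset.Ico_add_one_right_eq_Icc, Finset.sum_Ico_eq_sum_range]
    try simp only [Nat.add_sub_cancel]
    rw [← Fin.sum_univ_eq_sum_range (fun j => p.natDegree * ((1 + j) * a (1 + j)))]
    apply Finset.sum_congr rfl
    intro i _
    ring_nf
  haveI : FiniteDimensional K (DirectSum (Fin k) N) :=
    Module.Finite.equiv (DirectSum.linearEquivFunOnFintype K (Fin k) N).symm
  let e : E ≃ₗ[K] DirectSum (Fin k) N := LinearEquiv.ofFinrankEq _ _ hMrk.symm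
  have xsm : ∀ (c : K) (x : DirectSum (Fin k) N),
      (X : K[X]) • (c • x) = c • ((X : K[X]) • x) := by
    intro c x
    rw [← algebraMap_smul K[X] c x, smul_smul, ← algebraMap_smul K[X] c ((X : K[X]) • x),
      smul_smul, mul_comm]
  let u : Module.End K E :=
    { toFun := fun m => e.symm ((X : K[X]) • e m)
      map_add' := fun x y => by simp [smul_add]
      map_smul' := fun c x => by
        simp only [RingHom.id_apply, map_smul]
        rw [xsm, map_smul] }
  have hu : ∀ m : E, e (u m) = (X : K[X]) • e m := fun m => e.apply_symm_apply _
  let iso : Module.AEval' u ≃ₗ[K[X]] DirectSum (Fin k) N :=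
    LinearEquiv.ofAEval u e hu
  have key : ∀ f : K[X], (Polynomial.aeval u) f = 0 ↔
      ∀ x : DirectSum (Fin k) N, f • x = 0 := by
    intro f
    constructor
    · intro h x
      have h2 : f • iso.symm x = 0 := by
        have h3 : f • iso.symm x =
            (Module.AEval.of K E u)
              ((Polynomial.aeval u) f • (Module.AEval.of K E u).symm (iso.symm x)) := by
          rw [Module.AEval.of_aeval_smul]; simp
        rw [h3, h]; simp
      calc f • x = iso (f • iso.symm x) := by rw [map_smul, iso.apply_symm_apply]
        _ = 0 := by rw [h2, map_zero]
    · intro h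
      ext m
      have h1 : f • ((Module.AEval.of K E u) m) = 0 := by
        have h4 := h (iso ((Module.AEval.of K E u) m))
        rw [← map_smul] at h4
        exact iso.injective (by rw [h4, map_zero])
      have h2 : (Module.AEval.of K E u) ((Polynomial.aeval u) f • m) = 0 := by
        rw [Module.AEval.of_aeval_smul, h1]
      have h3 := (Module.AEval.of K E u).injective (by rw [h2, map_zero] :
        (Module.AEval.of K E u) ((Polynomial.aeval u) f • m) = (Module.AEval.of K E u) 0)
      simpa using h3
  have hann : ∀ x : DirectSum (Fin k) N, (p ^ k) • x = 0 := by
    have hfun : ∀ w : (∀ i, N i), (p ^ k) • w = 0 := by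
      intro w
      funext i j
      simp only [Pi.smul_apply, Pi.zero_apply]
      exact aux_smul_quot_eq_zero _ _ _ (pow_dvd_pow p (by omega))
    intro x
    let eqv := DirectSum.linearEquivFunOnFintype K[X] (Fin k) N
    exact eqv.injective (by rw [map_smul, hfun (eqv x), map_zero])
  have hnv : ∀ m : ℕ, (∀ x : DirectSum (Fin k) N, (p ^ m) • x = 0) → k ≤ m := by
    intro m hm
    have hk1 : k - 1 + 1 = k := by omega
    set i0 : Fin k := ⟨k - 1, by omega⟩ with hi0
    have hai : 0 < a (i0.1 + 1) := by
      show 0 < a (k - 1 + 1)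
      rw [hk1]; exact hak
    let v : N i0 := fun _ => Ideal.Quotient.mk _ 1
    have h5 := hm (DirectSum.of N i0 v)
    have h2 : (p ^ m) • v = 0 := by
      have h := congrArg (fun z => z i0) h5
      simp only [DirectSum.smul_apply, DirectSum.zero_apply] at h
      rw [DirectSum.of_eq_same] at h
      exact h
    have h3 := congrFun h2 ⟨0, hai⟩
    change p ^ m • (Ideal.Quotient.mk (Ideal.span {p ^ (i0.1 + 1)}) 1) = 0 at h3
    have hdvd : p ^ (i0.1 + 1) ∣ p ^ m := aux_smul_quot_one _ _ h3
    have hle := (pow_dvd_pow_iff hp0 hirr.not_isUnit).mp hdvd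
    have hle' : k - 1 + 1 ≤ m := hle
    omega
  refine ⟨u, ?_, ⟨iso⟩⟩
  have hint : IsIntegral K u := .of_finite K u
  have hdvd : minpoly K u ∣ p ^ k := minpoly.dvd K u ((key _).mpr hann)
  obtain ⟨m, hm, hassoc⟩ := (dvd_prime_pow hirr.prime k).mp hdvd
  have hmk : minpoly K u = p ^ m :=
    Polynomial.eq_of_monic_of_associated (minpoly.monic hint) (hp.pow _) hassoc
  have hkm : k ≤ m := hnv m ((key _).mp (by rw [← hmk]; exact minpoly.aeval K u))
  rw [hmk]
  congr 1
  omega
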